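/- Let E: [r₀, ∞) → [0, ∞) be a C² nondecreasing function with E(r₀) ≥ 0, E'(r₀) ≥ 0 and E''(r) ≥ ρ⁻²E(r) for all r > r₀. Then E(r) ≥ (1/2)E(r₀)·exp((r−r₀)/ρ) for all r ≥ r₀. -/

import Mathlib

open Set Real

/-- Differential comparison lemma: if `E : [r₀,∞) → [0,∞)` is `C²`,
nondecreasing, with `E'(r₀) ≥ 0` and `E'' ≥ ρ⁻²E`, then
`E(r) ≥ (1/2)E(r₀) exp((r−r₀)/ρ)` for all `r ≥ r₀`. -/
theorem energy_comparison (ρ r₀ : ℝ) (hρ : 0 < ρ) (E : ℝ → ℝ)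
    (hC2 : ContDiffOn ℝ 2 E (Set.Ici r₀))
    (hnonneg : ∀ r ∈ Set.Ici r₀, 0 ≤ E r)
    (hmono : MonotoneOn E (Set.Ici r₀))
    (hE'0 : 0 ≤ derivWithin E (Set.Ici r₀) r₀)
    (hE'' : ∀ r, r₀ < r →
      (ρ ^ 2)⁻¹ * E r ≤ derivWithin (derivWithin E (Set.Ici r₀)) (Set.Ici r₀) r) :
    ∀ r ∈ Set.Ici r₀, (1 / 2) * E r₀ * Real.exp ((r - r₀) / ρ) ≤ E r := by
  intro r hr
  have hρ0 : ρ ≠ 0 := hρ.ne'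
  set s := Set.Ici r₀ with hs
  have hud : UniqueDiffOn ℝ s := uniqueDiffOn_Ici r₀
  set E' := derivWithin E s with hE'def
  set E'' := derivWithin E' s with hE''def
  have hdE : DifferentiableOn ℝ E s := hC2.differentiableOn two_ne_zero
  have hC1' : ContDiffOn ℝ 1 E' s := hC2.derivWithin hud le_rfl
  have hdE' : DifferentiableOn ℝ E' s := hC1'.differentiableOn one_ne_zero
  have hd1 : ∀ x ∈ s, HasDerivWithinAt E (E' x) s x :=
    fun x hx => (hdE x hx).hasDerivWithinAt
  have hd2 : ∀ x ∈ s, HasDerivWithinAt E' (E'' x) s x :=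
    fun x hx => (hdE' x hx).hasDerivWithinAt
  -- exponential derivative helper
  have hexp : ∀ (a : ℝ) (x : ℝ), HasDerivAt (fun t : ℝ => Real.exp (a * t / ρ))
      (Real.exp (a * x / ρ) * (a / ρ)) x := by
    intro a x
    have h1 : HasDerivAt (fun t : ℝ => a * t / ρ) (a / ρ) x := by
      simpa using ((hasDerivAt_id x).const_mul a).div_const ρ
    simpa using h1.exp
  -- first auxiliary function
  set f : ℝ → ℝ := fun t => (E' t + E t / ρ) * Real.exp ((-1) * t / ρ) with hfdef
  have hfderiv : ∀ x ∈ s, HasDerivWithinAt f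
      ((E'' x + E' x / ρ) * Real.exp ((-1) * x / ρ)
        + (E' x + E x / ρ) * (Real.exp ((-1) * x / ρ) * ((-1) / ρ))) s x := by
    intro x hx
    exact ((hd2 x hx).add ((hd1 x hx).div_const ρ)).mul (hexp (-1) x).hasDerivWithinAt
  have hfdiff : DifferentiableOn ℝ f s :=
    fun x hx => (hfderiv x hx).differentiableWithinAt
  have hfmono : MonotoneOn f s := by
    apply monotoneOn_of_deriv_nonneg (convex_Ici r₀) (hfdiff.continuousOn)
      (by rw [interior_Ici]; exact hfdiff.mono Ioi_subset_Ici_self)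
    intro x hx
    rw [interior_Ici] at hx
    have hxs : x ∈ s := mem_Ici.mpr (le_of_lt hx)
    have hmem : s ∈ nhds x := Ici_mem_nhds hx
    have hda := (hfderiv x hxs).hasDerivAt hmem
    rw [hda.deriv]
    have key := hE'' x hx
    have heq : (E'' x + E' x / ρ) * Real.exp ((-1) * x / ρ)
        + (E' x + E x / ρ) * (Real.exp ((-1) * x / ρ) * ((-1) / ρ))
        = (E'' x - (ρ ^ 2)⁻¹ * E x) * Real.exp ((-1) * x / ρ) := by
      field_simp
      ring
    rw [heq]
    exact mul_nonneg (sub_nonneg.mpr key) (Real.exp_pos _).le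
  -- consequence: E' x + E x / ρ ≥ c * exp(x/ρ)
  set c : ℝ := (E r₀ / ρ) * Real.exp ((-1) * r₀ / ρ) with hcdef
  have hstepA : ∀ x ∈ s, c * Real.exp (1 * x / ρ) ≤ E' x + E x / ρ := by
    intro x hx
    have h1 : f r₀ ≤ f x := hfmono self_mem_Ici hx hx
    have h2 : c ≤ f r₀ := by
      rw [hfdef, hcdef]
      have := (Real.exp_pos ((-1) * r₀ / ρ)).le
      nlinarith [hE'0]
    have h3 : c ≤ (E' x + E x / ρ) * Real.exp ((-1) * x / ρ) := le_trans h2 h1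
    have hex : Real.exp ((-1) * x / ρ) * Real.exp (1 * x / ρ) = 1 := by
      rw [← Real.exp_add, show (-1) * x / ρ + 1 * x / ρ = 0 by ring, Real.exp_zero]
    have hp : (0:ℝ) < Real.exp (1 * x / ρ) := Real.exp_pos _
    calc c * Real.exp (1 * x / ρ)
        ≤ (E' x + E x / ρ) * Real.exp ((-1) * x / ρ) * Real.exp (1 * x / ρ) :=
          mul_le_mul_of_nonneg_right h3 hp.le
      _ = E' x + E x / ρ := by rw [mul_assoc, hex, mul_one]
  -- second auxiliary function
  set g : ℝ → ℝ := fun t => E t * Real.exp (1 * t / ρ) - c * ρ / 2 * Real.exp (2 * t / ρ)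
    with hgdef
  have hgderiv : ∀ x ∈ s, HasDerivWithinAt g
      (E' x * Real.exp (1 * x / ρ) + E x * (Real.exp (1 * x / ρ) * (1 / ρ))
        - c * ρ / 2 * (Real.exp (2 * x / ρ) * (2 / ρ))) s x := by
    intro x hx
    exact ((hd1 x hx).mul (hexp 1 x).hasDerivWithinAt).sub
      (((hexp 2 x).hasDerivWithinAt).const_mul (c * ρ / 2))
  have hgdiff : DifferentiableOn ℝ g s :=
    fun x hx => (hgderiv x hx).differentiableWithinAt
  have hgmono : MonotoneOn g s := by
    apply monotoneOn_of_deriv_nonneg (convex_Ici r₀) (hgdiff.continuousOn)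
      (by rw [interior_Ici]; exact hgdiff.mono Ioi_subset_Ici_self)
    intro x hx
    rw [interior_Ici] at hx
    have hxs : x ∈ s := mem_Ici.mpr (le_of_lt hx)
    have hmem : s ∈ nhds x := Ici_mem_nhds hx
    have hda := (hgderiv x hxs).hasDerivAt hmem
    rw [hda.deriv]
    have hA := hstepA x hxs
    have hsq : Real.exp (1 * x / ρ) * Real.exp (1 * x / ρ) = Real.exp (2 * x / ρ) := by
      rw [← Real.exp_add]; ring_nf
    have hp : (0:ℝ) < Real.exp (1 * x / ρ) := Real.exp_pos _
    have h := mul_le_mul_of_nonneg_right hA hp.le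
    have heq : E' x * Real.exp (1 * x / ρ) + E x * (Real.exp (1 * x / ρ) * (1 / ρ))
        - c * ρ / 2 * (Real.exp (2 * x / ρ) * (2 / ρ))
        = (E' x + E x / ρ) * Real.exp (1 * x / ρ) - c * Real.exp (2 * x / ρ) := by
      field_simp
    rw [heq, ← hsq]
    have h2 : c * (Real.exp (1 * x / ρ) * Real.exp (1 * x / ρ))
        ≤ (E' x + E x / ρ) * Real.exp (1 * x / ρ) := by rw [← mul_assoc]; exact h
    linarith [h2]
  -- conclude
  have hg : g r₀ ≤ g r := hgmono self_mem_Ici hr hr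
  rw [hgdef] at hg
  simp only at hg
  set a := Real.exp (1 * r / ρ) with hadef
  set b := Real.exp (1 * r₀ / ρ) with hbdef
  have hb : (0:ℝ) < b := Real.exp_pos _
  have ha : (0:ℝ) < a := Real.exp_pos _
  have hA : (0:ℝ) < Real.exp ((r - r₀) / ρ) := Real.exp_pos _
  have hab : b * Real.exp ((r - r₀) / ρ) = a := by
    rw [hbdef, hadef, ← Real.exp_add]; ring_nf
  have hcb : c * b = E r₀ / ρ := by
    rw [hcdef, hbdef, mul_assoc, ← Real.exp_add,
      show (-1) * r₀ / ρ + 1 * r₀ / ρ = 0 by ring, Real.exp_zero, mul_one]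
  have h2r : Real.exp (2 * r / ρ) = a * a := by
    rw [hadef, ← Real.exp_add]; ring_nf
  have h2r0 : Real.exp (2 * r₀ / ρ) = b * b := by
    rw [hbdef, ← Real.exp_add]; ring_nf
  rw [h2r, h2r0] at hg
  have hE0 : 0 ≤ E r₀ := hnonneg r₀ self_mem_Ici
  have hcval : c = E r₀ / ρ / b := (eq_div_iff hb.ne').mpr hcb
  rw [hcval, ← hab] at hg
  set A := Real.exp ((r - r₀) / ρ) with hAdef
  have hg2 : E r₀ / 2 * b + E r₀ / 2 * b * A * A ≤ E r * (b * A) := by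
    have e1 : E r₀ / ρ / b * ρ / 2 * (b * b) = E r₀ / 2 * b := by
      field_simp
    have e2 : E r₀ / ρ / b * ρ / 2 * ((b * A) * (b * A)) = E r₀ / 2 * b * A * A := by
      field_simp
    linarith [hg, e1.symm ▸ hg, e2]
  have hbA : (0:ℝ) < b * A := mul_pos hb hA
  have key : 1 / 2 * E r₀ * A * (b * A) ≤ E r * (b * A) := by
    nlinarith [hg2, mul_nonneg hE0 hb.le]
  exact le_of_mul_le_mul_right key hbA
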